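/- First-order optimality for the gaussian Brascamp--Lieb functional: let $\Phi(\mathbf{X})=\sum_{j=1}^m c_j\log\det X_j - \log\det\big(\sum_{j=1}^m c_jB_j^*X_jB_j+\mathcal{Q}\big)$ defined for positive definite $X_j\le G_j$ making $\widetilde{M}(\mathbf{X}):=\sum_j c_jB_j^*X_jB_j+\mathcal{Q}$ positive definite. If $\mathbf{A}$ (with $0<A_j\le G_j$, $\widetilde{M}(\mathbf{A})>0$) minimizes $\Phi$ over all $\mathbf{X}\le\mathbf{G}$, then for each $j$: (i) $c_j\big(A_j^{-1}-B_j\widetilde{M}(\mathbf{A})^{-1}B_j^*\big)\le 0$, and (ii) $\big(A_j^{-1}-B_j\widetilde{M}(\mathbf{A})^{-1}B_j^*\big)(G_j-A_j)=0$. -/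

import Mathlib

open Matrix BigOperators

variable {p : Type*} [Fintype p] [DecidableEq p]

lemma my_trace_eq_sum_eigenvalues {Z : Matrix p p ℝ} (hZ : Z.IsHermitian) :
    Z.trace = ∑ i, hZ.eigenvalues i := by
  have h := hZ.spectral_theorem
  rw [Unitary.conjStarAlgAut_apply] at h
  calc Z.trace = ((hZ.eigenvectorUnitary : Matrix p p ℝ) * diagonal (RCLike.ofReal ∘ hZ.eigenvalues)
      * (star (hZ.eigenvectorUnitary : Matrix p p ℝ))).trace := by rw [← h]
    _ = (diagonal (RCLike.ofReal ∘ hZ.eigenvalues) *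
        ((star (hZ.eigenvectorUnitary : Matrix p p ℝ)) * (hZ.eigenvectorUnitary : Matrix p p ℝ))).trace := by
        rw [Matrix.trace_mul_comm, ← Matrix.mul_assoc, Matrix.trace_mul_comm ((star (hZ.eigenvectorUnitary : Matrix p p ℝ)) * (hZ.eigenvectorUnitary : Matrix p p ℝ))]
    _ = ∑ i, hZ.eigenvalues i := by
        rw [Unitary.coe_star_mul_self, Matrix.mul_one, Matrix.trace_diagonal]
        simp [RCLike.ofReal]

lemma my_conj_posDef {R Y : Matrix p p ℝ} (hR : R.IsHermitian) (hRu : IsUnit R.det)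
    (hY : Y.PosDef) : (R * Y * R).PosDef := by
  have hRT : Rᵀ = R := by
    rw [← Matrix.conjTranspose_eq_transpose_of_trivial]; exact hR.eq
  refine Matrix.posDef_iff_dotProduct_mulVec.mpr ⟨?_, ?_⟩
  · show (R * Y * R)ᴴ = R * Y * R
    have hYT : Yᵀ = Y := by
      rw [← Matrix.conjTranspose_eq_transpose_of_trivial]; exact hY.isHermitian.eq
    simp [Matrix.conjTranspose_mul, Matrix.conjTranspose_eq_transpose_of_trivial, hRT, hYT,
      Matrix.mul_assoc]
  · intro x hx
    have hinj : Function.Injective (R.mulVec) := Matrix.mulVec_injective_iff_isUnit.mpr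
      (Matrix.isUnit_iff_isUnit_det _ |>.mpr hRu)
    have hx' : R *ᵥ x ≠ 0 := by
      intro h0
      exact hx (hinj (by simpa using h0))
    have h2 := hY.dotProduct_mulVec_pos hx'
    have hcalc : star x ⬝ᵥ ((R * Y * R) *ᵥ x) = star (R *ᵥ x) ⬝ᵥ (Y *ᵥ (R *ᵥ x)) := by
      simp only [← Matrix.mulVec_mulVec, star_trivial]
      rw [Matrix.dotProduct_mulVec, show x ᵥ* R = R *ᵥ x by rw [← hRT, Matrix.vecMul_transpose, hRT]]
    rw [hcalc]
    exact h2

open scoped MatrixOrder in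
lemma my_logdet_le {X Y : Matrix p p ℝ} (hX : X.PosDef) (hY : Y.PosDef) :
    Real.log Y.det - Real.log X.det ≤ (X⁻¹ * (Y - X)).trace := by
  set R := CFC.sqrt X with hRdef
  have hRps : R.PosSemidef := Matrix.nonneg_iff_posSemidef.mp (CFC.sqrt_nonneg X)
  have hRR : R * R = X := CFC.sqrt_mul_sqrt_self X hX.posSemidef.nonneg
  have hXdet : (0:ℝ) < X.det := hX.det_pos
  have hYdet : (0:ℝ) < Y.det := hY.det_pos
  have hRdet2 : R.det * R.det = X.det := by rw [← Matrix.det_mul, hRR]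
  have hRdet : R.det ≠ 0 := by
    intro h; rw [h, mul_zero] at hRdet2; exact hXdet.ne' hRdet2.symm
  have hRunit : IsUnit R.det := hRdet.isUnit
  have hRips : (R⁻¹).PosSemidef := hRps.inv
  have hRidet : (R⁻¹).det = (R.det)⁻¹ := by
    rw [Matrix.det_nonsing_inv, Ring.inverse_eq_inv']
  have hRiunit : IsUnit (R⁻¹).det := by
    rw [hRidet]; exact (inv_ne_zero hRdet).isUnit
  set Z := R⁻¹ * Y * R⁻¹ with hZdef
  have hZ : Z.PosDef := my_conj_posDef hRips.isHermitian hRiunit hY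
  have hZdet : Z.det = Y.det / X.det := by
    rw [hZdef, Matrix.det_mul, Matrix.det_mul, hRidet, ← hRdet2]
    field_simp
  -- trace identity
  have hXinv : X⁻¹ = R⁻¹ * R⁻¹ := by rw [← hRR, Matrix.mul_inv_rev]
  have htrZ : Z.trace = (X⁻¹ * Y).trace := by
    rw [hZdef, Matrix.trace_mul_comm (R⁻¹ * Y) R⁻¹, ← Matrix.mul_assoc, ← hXinv]
  -- eigenvalue bound
  have hlog : Real.log Z.det ≤ Z.trace - (Fintype.card p : ℝ) := by
    have hdet : Z.det = ∏ i, hZ.isHermitian.eigenvalues i := by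
      simpa using hZ.isHermitian.det_eq_prod_eigenvalues
    have htr : Z.trace = ∑ i, hZ.isHermitian.eigenvalues i :=
      my_trace_eq_sum_eigenvalues hZ.isHermitian
    rw [hdet, htr, Real.log_prod (fun i _ => (hZ.eigenvalues_pos i).ne')]
    have : ∀ i ∈ Finset.univ, Real.log (hZ.isHermitian.eigenvalues i)
        ≤ hZ.isHermitian.eigenvalues i - 1 := fun i _ =>
      Real.log_le_sub_one_of_pos (hZ.eigenvalues_pos i)
    calc ∑ i, Real.log (hZ.isHermitian.eigenvalues i)
        ≤ ∑ i, (hZ.isHermitian.eigenvalues i - 1) := Finset.sum_le_sum this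
      _ = (∑ i, hZ.isHermitian.eigenvalues i) - (Fintype.card p : ℝ) := by
          rw [Finset.sum_sub_distrib]; simp [Finset.card_univ]
  have hXunit : IsUnit X.det := hXdet.ne'.isUnit
  have hlogZ : Real.log Z.det = Real.log Y.det - Real.log X.det := by
    rw [hZdet, Real.log_div hYdet.ne' hXdet.ne']
  have hRHS : (X⁻¹ * (Y - X)).trace = (X⁻¹ * Y).trace - (Fintype.card p : ℝ) := by
    rw [Matrix.mul_sub, Matrix.trace_sub, Matrix.nonsing_inv_mul X hXunit, Matrix.trace_one]
  rw [hRHS, ← htrZ, ← hlogZ]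
  exact hlog

lemma my_coercive {X : Matrix p p ℝ} (hX : X.PosDef) :
    ∃ c : ℝ, 0 < c ∧ ∀ x : p → ℝ, c * (x ⬝ᵥ x) ≤ x ⬝ᵥ (X *ᵥ x) := by
  rcases isEmpty_or_nonempty p with hp | hp
  · exact ⟨1, one_pos, fun x => by simp [dotProduct]⟩
  have h := hX.isHermitian
  set U : Matrix p p ℝ := (h.eigenvectorUnitary : Matrix p p ℝ) with hU
  have hUT : star U * U = 1 := Unitary.coe_star_mul_self _
  have hUT' : U * star U = 1 := Unitary.coe_mul_star_self _
  set μ := h.eigenvalues with hμ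
  obtain ⟨i0, -, hi0⟩ := Finset.exists_min_image Finset.univ μ ⟨Classical.arbitrary p, Finset.mem_univ _⟩
  refine ⟨μ i0, hX.eigenvalues_pos i0, fun x => ?_⟩
  have hUst : (star U)ᵀ = U := by
    have : star U = Uᵀ := Matrix.conjTranspose_eq_transpose_of_trivial U
    rw [this, Matrix.transpose_transpose]
  set y := (star U) *ᵥ x with hy
  have hyy : y ⬝ᵥ y = x ⬝ᵥ x := by
    rw [hy, Matrix.dotProduct_mulVec, ← Matrix.mulVec_transpose, hUst, Matrix.mulVec_mulVec, hUT',
      Matrix.one_mulVec, dotProduct_comm]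
  have hxvU : x ᵥ* U = y := by rw [← hUst, Matrix.vecMul_transpose, hy]
  have hXx : x ⬝ᵥ (X *ᵥ x) = ∑ i, μ i * (y i)^2 := by
    calc x ⬝ᵥ (X *ᵥ x) = y ⬝ᵥ (diagonal (RCLike.ofReal ∘ μ) *ᵥ y) := by
          conv_lhs => rw [h.spectral_theorem, Unitary.conjStarAlgAut_apply]
          rw [← hU, ← hμ, Matrix.mul_assoc, ← Matrix.mulVec_mulVec, ← Matrix.mulVec_mulVec, ← hy,
            Matrix.dotProduct_mulVec, hxvU]
      _ = ∑ i, μ i * (y i)^2 := by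
          simp only [dotProduct, Matrix.mulVec_diagonal]
          exact Finset.sum_congr rfl fun i _ => by simp [RCLike.ofReal]; ring
  have hxx : x ⬝ᵥ x = ∑ i, (y i)^2 := by
    rw [← hyy]; simp [dotProduct, sq]
  rw [hXx, hxx, Finset.mul_sum]
  refine Finset.sum_le_sum fun i _ => ?_
  exact mul_le_mul_of_nonneg_right (hi0 i (Finset.mem_univ i)) (sq_nonneg _)

lemma my_dot_self_pos {x : p → ℝ} (hx : x ≠ 0) : 0 < x ⬝ᵥ x := by
  rcases lt_or_eq_of_le (Finset.sum_nonneg fun i _ => mul_self_nonneg (x i) :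
      (0:ℝ) ≤ x ⬝ᵥ x) with h | h
  · exact h
  · exact absurd (dotProduct_self_eq_zero.mp h.symm) hx

lemma my_quad_bound (E : Matrix p p ℝ) (x : p → ℝ) :
    |x ⬝ᵥ (E *ᵥ x)| ≤ (∑ i, ∑ j, |E i j|) * (x ⬝ᵥ x) := by
  have hS : ∀ k, (x k)*(x k) ≤ x ⬝ᵥ x := fun k =>
    Finset.single_le_sum (fun i _ => mul_self_nonneg (x i)) (Finset.mem_univ k)
  have hxx0 : 0 ≤ x ⬝ᵥ x := Finset.sum_nonneg fun i _ => mul_self_nonneg (x i)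
  have h1 : x ⬝ᵥ (E *ᵥ x) = ∑ i, ∑ j, x i * (E i j * x j) := by
    simp [dotProduct, Matrix.mulVec, Finset.mul_sum]
  rw [h1, Finset.sum_mul]
  refine (Finset.abs_sum_le_sum_abs _ _).trans (Finset.sum_le_sum fun i _ => ?_)
  rw [Finset.sum_mul]
  refine (Finset.abs_sum_le_sum_abs _ _).trans (Finset.sum_le_sum fun j _ => ?_)
  have hij : |x i * x j| ≤ x ⬝ᵥ x := by
    rw [abs_mul]
    nlinarith [hS i, hS j, abs_nonneg (x i), abs_nonneg (x j), sq_abs (x i), sq_abs (x j),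
      abs_mul_abs_self (x i), abs_mul_abs_self (x j)]
  calc |x i * (E i j * x j)| = |E i j| * |x i * x j| := by
        rw [abs_mul, abs_mul, abs_mul]; ring
    _ ≤ |E i j| * (x ⬝ᵥ x) := mul_le_mul_of_nonneg_left hij (abs_nonneg _)

lemma my_open_posDef {X E : Matrix p p ℝ} (hX : X.PosDef) (hE : E.IsHermitian) :
    ∃ ε : ℝ, 0 < ε ∧ ∀ t : ℝ, |t| < ε → (X + t • E).PosDef := by
  obtain ⟨c, hc, hcoer⟩ := my_coercive hX
  set K : ℝ := ∑ i, ∑ j, |E i j| with hK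
  have hK0 : 0 ≤ K := Finset.sum_nonneg fun i _ => Finset.sum_nonneg fun j _ => abs_nonneg _
  refine ⟨c / (K + 1), by positivity, fun t ht => ?_⟩
  refine Matrix.posDef_iff_dotProduct_mulVec.mpr ⟨?_, ?_⟩
  · show (X + t • E)ᴴ = X + t • E
    rw [Matrix.conjTranspose_add, Matrix.conjTranspose_smul, hX.isHermitian.eq, hE.eq]
    simp
  · intro x hx
    have hS : 0 < x ⬝ᵥ x := my_dot_self_pos hx
    have hEx := my_quad_bound E x
    have hXx := hcoer x
    have hsplit : star x ⬝ᵥ ((X + t • E) *ᵥ x) = x ⬝ᵥ (X *ᵥ x) + t * (x ⬝ᵥ (E *ᵥ x)) := by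
      rw [Matrix.add_mulVec, Matrix.smul_mulVec, star_trivial, dotProduct_add,
        dotProduct_smul, smul_eq_mul]
    rw [hsplit]
    have htK : |t| * K < c := by
      calc |t| * K ≤ |t| * (K + 1) := by nlinarith [abs_nonneg t]
        _ < c / (K + 1) * (K + 1) := by
            apply mul_lt_mul_of_pos_right ht; positivity
        _ = c := by field_simp
    have habs : |t * (x ⬝ᵥ (E *ᵥ x))| ≤ |t| * K * (x ⬝ᵥ x) := by
      rw [abs_mul, mul_assoc]
      exact mul_le_mul_of_nonneg_left hEx (abs_nonneg t)
    nlinarith [neg_abs_le (t * (x ⬝ᵥ (E *ᵥ x)))]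

lemma my_trace_transpose_mul_self_eq_zero {X : Matrix p p ℝ}
    (h : (Xᴴ * X).trace = 0) : X = 0 := by
  have hsum : ∑ j, ∑ i, (X i j) * (X i j) = 0 := by
    rw [← h]
    simp [Matrix.trace, Matrix.diag, Matrix.mul_apply, Matrix.conjTranspose_apply]
  ext i j
  have hnn : ∀ j' ∈ Finset.univ, (0:ℝ) ≤ ∑ i', (X i' j') * (X i' j') :=
    fun j' _ => Finset.sum_nonneg fun i' _ => mul_self_nonneg _
  have hz := (Finset.sum_eq_zero_iff_of_nonneg hnn).mp hsum j (Finset.mem_univ j)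
  have hz2 := (Finset.sum_eq_zero_iff_of_nonneg
    (fun i' _ => mul_self_nonneg (X i' j))).mp hz i (Finset.mem_univ i)
  simpa [mul_self_eq_zero] using hz2

open scoped MatrixOrder in
lemma my_psd_mul_trace_zero {P D : Matrix p p ℝ} (hP : P.PosSemidef) (hD : D.PosSemidef)
    (h : (P * D).trace = 0) : P * D = 0 := by
  set q := CFC.sqrt P with hq
  set r := CFC.sqrt D with hr
  have hqq : q * q = P := CFC.sqrt_mul_sqrt_self P hP.nonneg
  have hrr : r * r = D := CFC.sqrt_mul_sqrt_self D hD.nonneg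
  have hqH : qᴴ = q := (Matrix.nonneg_iff_posSemidef.mp (CFC.sqrt_nonneg P)).isHermitian
  have hrH : rᴴ = r := (Matrix.nonneg_iff_posSemidef.mp (CFC.sqrt_nonneg D)).isHermitian
  have key : (r * q)ᴴ * (r * q) = q * (r * r) * q := by
    rw [Matrix.conjTranspose_mul, hqH, hrH]
    rw [Matrix.mul_assoc, Matrix.mul_assoc, Matrix.mul_assoc]
  have htr : ((r * q)ᴴ * (r * q)).trace = 0 := by
    rw [key, hrr]
    calc (q * D * q).trace = (q * (q * D)).trace := Matrix.trace_mul_comm _ _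
      _ = ((q * q) * D).trace := by rw [Matrix.mul_assoc]
      _ = 0 := by rw [hqq, h]
  have hrq : r * q = 0 := my_trace_transpose_mul_self_eq_zero htr
  have hqr : q * r = 0 := by
    have : (r * q)ᴴ = 0 := by rw [hrq]; simp
    rwa [Matrix.conjTranspose_mul, hqH, hrH] at this
  calc P * D = q * (q * r) * r := by rw [← hqq, ← hrr]; noncomm_ring
    _ = 0 := by rw [hqr]; simp

lemma my_trace_mul_vecMulVec (S : Matrix p p ℝ) (x : p → ℝ) :
    (S * Matrix.vecMulVec x x).trace = x ⬝ᵥ (S *ᵥ x) := by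
  simp only [Matrix.trace, Matrix.diag, Matrix.mul_apply, Matrix.vecMulVec_apply,
    dotProduct, Matrix.mulVec]
  refine Finset.sum_congr rfl fun i _ => ?_
  rw [Finset.mul_sum]
  refine Finset.sum_congr rfl fun k _ => by ring

lemma my_dirDeriv {p q : Type*} [Fintype p] [DecidableEq p] [Fintype q] [DecidableEq q]
    {A0 : Matrix p p ℝ} {M0 : Matrix q q ℝ} (L : Matrix p q ℝ) (c : ℝ) (D : Matrix p p ℝ)
    (hA0 : A0.PosDef) (hM0 : M0.PosDef) {ε : ℝ} (hε : 0 < ε)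
    (hAd : ∀ t ∈ Set.Ioo (0:ℝ) ε, (A0 + t • D).PosDef)
    (hMd : ∀ t ∈ Set.Ioo (0:ℝ) ε, (M0 + (t * c) • (Lᵀ * D * L)).PosDef)
    (hineq : ∀ t ∈ Set.Ioo (0:ℝ) ε,
      0 ≤ c * (Real.log (A0 + t • D).det - Real.log A0.det)
        - (Real.log (M0 + (t * c) • (Lᵀ * D * L)).det - Real.log M0.det)) :
    0 ≤ c * ((A0⁻¹ - L * M0⁻¹ * Lᵀ) * D).trace := by
  set N := Lᵀ * D * L with hN
  set a : ℝ := c * (A0⁻¹ * D).trace with ha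
  set u : ℝ → ℝ := fun t => max a (c * ((A0 + t • D)⁻¹ * D).trace)
    - c * ((M0 + (t * c) • N)⁻¹ * N).trace with hu
  have step1 : ∀ t ∈ Set.Ioo (0:ℝ) ε, 0 ≤ u t := by
    intro t ht
    have htpos : 0 < t := ht.1
    have hAt := hAd t ht
    have hMt := hMd t ht
    have h1 : Real.log (A0 + t • D).det - Real.log A0.det ≤ t * (A0⁻¹ * D).trace := by
      have := my_logdet_le hA0 hAt
      rwa [add_sub_cancel_left, Matrix.mul_smul, Matrix.trace_smul, smul_eq_mul] at this
    have h2 : t * ((A0 + t • D)⁻¹ * D).trace ≤ Real.log (A0 + t • D).det - Real.log A0.det := by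
      have := my_logdet_le hAt hA0
      rw [show A0 - (A0 + t • D) = -(t • D) by abel] at this
      rw [Matrix.mul_neg, Matrix.trace_neg, Matrix.mul_smul, Matrix.trace_smul, smul_eq_mul]
        at this
      linarith
    have h3 : (t * c) * ((M0 + (t * c) • N)⁻¹ * N).trace
        ≤ Real.log (M0 + (t * c) • N).det - Real.log M0.det := by
      have := my_logdet_le hMt hM0
      rw [show M0 - (M0 + (t * c) • N) = -((t * c) • N) by abel] at this
      rw [Matrix.mul_neg, Matrix.trace_neg, Matrix.mul_smul, Matrix.trace_smul, smul_eq_mul]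
        at this
      linarith
    have hc1 : c * (Real.log (A0 + t • D).det - Real.log A0.det)
        ≤ t * max a (c * ((A0 + t • D)⁻¹ * D).trace) := by
      rcases le_or_gt 0 c with hc | hc
      · calc c * (Real.log (A0 + t • D).det - Real.log A0.det)
            ≤ c * (t * (A0⁻¹ * D).trace) := mul_le_mul_of_nonneg_left h1 hc
          _ = t * a := by rw [ha]; ring
          _ ≤ t * max a _ := mul_le_mul_of_nonneg_left (le_max_left _ _) htpos.le
      · calc c * (Real.log (A0 + t • D).det - Real.log A0.det)
            ≤ c * (t * ((A0 + t • D)⁻¹ * D).trace) := by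
              exact mul_le_mul_of_nonpos_left h2 hc.le
          _ = t * (c * ((A0 + t • D)⁻¹ * D).trace) := by ring
          _ ≤ t * max a _ := mul_le_mul_of_nonneg_left (le_max_right _ _) htpos.le
    have h0 := hineq t ht
    have : 0 ≤ t * u t := by
      rw [hu]
      simp only
      rw [mul_sub]
      have : t * (c * ((M0 + (t * c) • N)⁻¹ * N).trace)
          = (t * c) * ((M0 + (t * c) • N)⁻¹ * N).trace := by ring
      rw [this]
      linarith
    exact nonneg_of_mul_nonneg_right this htpos
  -- limit
  have hcA : Filter.Tendsto (fun t : ℝ => (A0 + t • D)⁻¹) (nhds 0) (nhds A0⁻¹) := by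
    have h0 : Filter.Tendsto (fun t : ℝ => A0 + t • D) (nhds 0) (nhds A0) := by
      have : Continuous (fun t : ℝ => A0 + t • D) :=
        continuous_const.add (continuous_id.smul continuous_const)
      simpa using this.tendsto 0
    have hinv : ContinuousAt Inv.inv A0 := by
      apply continuousAt_matrix_inv
      rw [Ring.inverse_eq_inv']
      exact continuousAt_inv₀ hA0.det_pos.ne'
    exact hinv.tendsto.comp h0
  have hcM : Filter.Tendsto (fun t : ℝ => (M0 + (t * c) • N)⁻¹) (nhds 0) (nhds M0⁻¹) := by
    have h0 : Filter.Tendsto (fun t : ℝ => M0 + (t * c) • N) (nhds 0) (nhds M0) := by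
      have : Continuous (fun t : ℝ => M0 + (t * c) • N) :=
        continuous_const.add ((continuous_id.mul continuous_const).smul continuous_const)
      simpa using this.tendsto 0
    have hinv : ContinuousAt Inv.inv M0 := by
      apply continuousAt_matrix_inv
      rw [Ring.inverse_eq_inv']
      exact continuousAt_inv₀ hM0.det_pos.ne'
    exact hinv.tendsto.comp h0
  have hT : Continuous (fun X : Matrix p p ℝ => c * (X * D).trace) :=
    continuous_const.mul ((continuous_id.matrix_mul continuous_const).matrix_trace)
  have hT' : Continuous (fun X : Matrix q q ℝ => c * (X * N).trace) :=
    continuous_const.mul ((continuous_id.matrix_mul continuous_const).matrix_trace)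
  have hlim : Filter.Tendsto u (nhds 0) (nhds (a - c * (M0⁻¹ * N).trace)) := by
    have l1 : Filter.Tendsto (fun t : ℝ => c * ((A0 + t • D)⁻¹ * D).trace) (nhds 0)
        (nhds (c * (A0⁻¹ * D).trace)) := (hT.tendsto _).comp hcA
    have l2 : Filter.Tendsto (fun t : ℝ => c * ((M0 + (t * c) • N)⁻¹ * N).trace) (nhds 0)
        (nhds (c * (M0⁻¹ * N).trace)) := (hT'.tendsto _).comp hcM
    have := (Filter.Tendsto.max (tendsto_const_nhds (x := a)) l1).sub l2
    rwa [← ha, max_self] at this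
  have hfinal : 0 ≤ a - c * (M0⁻¹ * N).trace := by
    refine ge_of_tendsto (hlim.mono_left (nhdsWithin_le_nhds : nhdsWithin (0:ℝ) (Set.Ioi 0) ≤ nhds 0)) ?_
    filter_upwards [Ioo_mem_nhdsGT_of_mem (Set.left_mem_Ico.mpr hε)] with t ht
    exact step1 t ht
  have htrc : (M0⁻¹ * N).trace = ((L * M0⁻¹ * Lᵀ) * D).trace := by
    rw [hN, show M0⁻¹ * (Lᵀ * D * L) = (M0⁻¹ * Lᵀ * D) * L by simp [Matrix.mul_assoc],
      Matrix.trace_mul_comm, show L * (M0⁻¹ * Lᵀ * D) = (L * M0⁻¹ * Lᵀ) * D by simp [Matrix.mul_assoc]]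
  rw [Matrix.sub_mul, Matrix.trace_sub, mul_sub]
  rw [htrc] at hfinal
  rw [ha] at hfinal
  linarith

lemma my_vecMulVec_psd (x : p → ℝ) : (Matrix.vecMulVec x x).PosSemidef := by
  refine Matrix.posSemidef_iff_dotProduct_mulVec.mpr ⟨?_, ?_⟩
  · show (Matrix.vecMulVec x x)ᴴ = _
    ext i j
    simp [Matrix.conjTranspose_apply, Matrix.vecMulVec_apply, mul_comm]
  · intro y
    have : star y ⬝ᵥ (Matrix.vecMulVec x x *ᵥ y) = (x ⬝ᵥ y) * (x ⬝ᵥ y) := by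
      simp only [star_trivial, dotProduct, Matrix.mulVec, Matrix.vecMulVec_apply]
      rw [Finset.sum_mul]
      refine Finset.sum_congr rfl fun i _ => ?_
      rw [Finset.mul_sum, Finset.mul_sum]
      exact Finset.sum_congr rfl fun k _ => by ring
    rw [this]
    exact mul_self_nonneg _

lemma my_psd_smul {M : Matrix p p ℝ} (hM : M.PosSemidef) {t : ℝ} (ht : 0 ≤ t) :
    (t • M).PosSemidef := by
  refine Matrix.posSemidef_iff_dotProduct_mulVec.mpr ⟨?_, ?_⟩
  · show (t • M)ᴴ = t • M
    rw [Matrix.conjTranspose_smul, hM.isHermitian.eq]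
    simp
  · intro x
    have : star x ⬝ᵥ ((t • M) *ᵥ x) = t * (star x ⬝ᵥ (M *ᵥ x)) := by
      rw [Matrix.smul_mulVec, dotProduct_smul, smul_eq_mul]
    rw [this]
    exact mul_nonneg ht (hM.dotProduct_mulVec_nonneg x)

/-- First-order optimality conditions for the gaussian Brascamp–Lieb functional. -/
theorem stmt13 (n m : ℕ) (nj : Fin m → ℕ)
    (B : ∀ j : Fin m, Matrix (Fin (nj j)) (Fin n) ℝ)
    (hBsurj : ∀ j, Function.Surjective (fun x : Fin n → ℝ => (B j).mulVec x))
    (c : Fin m → ℝ) (hc : ∀ j, c j ≠ 0)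
    (Q : Matrix (Fin n) (Fin n) ℝ) (hQ : Q.IsHermitian)
    (G A : ∀ j : Fin m, Matrix (Fin (nj j)) (Fin (nj j)) ℝ)
    (hG : ∀ j, (G j).PosDef)
    (hA : ∀ j, (A j).PosDef) (hAG : ∀ j, (G j - A j).PosSemidef)
    (hMA : (∑ j, c j • ((B j)ᵀ * A j * B j) + Q).PosDef)
    (hmin : ∀ X : ∀ j : Fin m, Matrix (Fin (nj j)) (Fin (nj j)) ℝ,
      (∀ j, (X j).PosDef) → (∀ j, (G j - X j).PosSemidef) →
      ((∑ j, c j • ((B j)ᵀ * X j * B j) + Q).PosDef) →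
      (∑ j, c j * Real.log (A j).det)
          - Real.log (∑ j, c j • ((B j)ᵀ * A j * B j) + Q).det
        ≤ (∑ j, c j * Real.log (X j).det)
          - Real.log (∑ j, c j • ((B j)ᵀ * X j * B j) + Q).det) :
    ∀ j : Fin m,
      (-(c j • ((A j)⁻¹ - B j * (∑ k, c k • ((B k)ᵀ * A k * B k) + Q)⁻¹ * (B j)ᵀ))).PosSemidef
      ∧ ((A j)⁻¹ - B j * (∑ k, c k • ((B k)ᵀ * A k * B k) + Q)⁻¹ * (B j)ᵀ) * (G j - A j) = 0 := by
  intro j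
  set M : Matrix (Fin n) (Fin n) ℝ := ∑ k, c k • ((B k)ᵀ * A k * B k) + Q with hMdef
  have hMpd : M.PosDef := hMA
  set S : Matrix (Fin (nj j)) (Fin (nj j)) ℝ := (A j)⁻¹ - B j * M⁻¹ * (B j)ᵀ with hSdef
  -- S is Hermitian
  have hSh : S.IsHermitian := by
    have h1 : ((A j)⁻¹).IsHermitian := (hA j).inv.isHermitian
    have h2 : (B j * M⁻¹ * (B j)ᵀ).IsHermitian := by
      have := Matrix.isHermitian_mul_mul_conjTranspose (B j) hMpd.inv.isHermitian
      rwa [Matrix.conjTranspose_eq_transpose_of_trivial] at this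
    exact h1.sub h2
  -- the key directional inequality
  have key : ∀ D : Matrix (Fin (nj j)) (Fin (nj j)) ℝ, D.IsHermitian →
      (∃ ε : ℝ, 0 < ε ∧ ∀ t ∈ Set.Ioo (0:ℝ) ε,
        (A j + t • D).PosDef ∧ (G j - (A j + t • D)).PosSemidef) →
      0 ≤ c j * (S * D).trace := by
    intro D hDh ⟨ε₁, hε₁, hprop⟩
    set N : Matrix (Fin n) (Fin n) ℝ := (B j)ᵀ * D * (B j) with hNdef
    have hNh : N.IsHermitian := by
      have := Matrix.isHermitian_conjTranspose_mul_mul (B j) hDh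
      rwa [Matrix.conjTranspose_eq_transpose_of_trivial] at this
    have hEh : (c j • N).IsHermitian := by
      show (c j • N)ᴴ = c j • N
      rw [Matrix.conjTranspose_smul, hNh.eq]
      simp
    obtain ⟨ε₂, hε₂, hMopen⟩ := my_open_posDef hMpd hEh
    set ε : ℝ := min ε₁ ε₂ with hεdef
    have hε : 0 < ε := lt_min hε₁ hε₂
    have hMt : ∀ t ∈ Set.Ioo (0:ℝ) ε, (M + (t * c j) • N).PosDef := by
      intro t ht
      have := hMopen t (by
        rw [abs_of_pos ht.1]
        exact lt_of_lt_of_le ht.2 (min_le_right _ _))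
      rwa [smul_smul] at this
    have := my_dirDeriv (B j) (c j) D (hA j) hMpd hε
      (fun t ht => (hprop t ⟨ht.1, lt_of_lt_of_le ht.2 (min_le_left _ _)⟩).1)
      hMt ?_
    · rwa [← hSdef] at this
    -- establish the inequality hypothesis from minimality
    intro t ht
    have htIoo₁ : t ∈ Set.Ioo (0:ℝ) ε₁ := ⟨ht.1, lt_of_lt_of_le ht.2 (min_le_left _ _)⟩
    set X : ∀ k : Fin m, Matrix (Fin (nj k)) (Fin (nj k)) ℝ :=
      Function.update A j (A j + t • D) with hXdef
    have hXj : X j = A j + t • D := Function.update_self j _ A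
    have hXk : ∀ k, k ≠ j → X k = A k := fun k hk => Function.update_of_ne hk _ A
    have hX1 : ∀ k, (X k).PosDef := by
      intro k
      by_cases hkj : k = j
      · subst hkj; rw [hXj]; exact (hprop t htIoo₁).1
      · rw [hXk k hkj]; exact hA k
    have hX2 : ∀ k, (G k - X k).PosSemidef := by
      intro k
      by_cases hkj : k = j
      · subst hkj; rw [hXj]; exact (hprop t htIoo₁).2
      · rw [hXk k hkj]; exact hAG k
    have hsum : ∑ k, c k • ((B k)ᵀ * X k * B k)
        = (∑ k, c k • ((B k)ᵀ * A k * B k)) + (t * c j) • N := by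
      rw [← Finset.add_sum_erase _ (fun k => c k • ((B k)ᵀ * X k * B k)) (Finset.mem_univ j),
          ← Finset.add_sum_erase _ (fun k => c k • ((B k)ᵀ * A k * B k)) (Finset.mem_univ j)]
      have he : ∑ k ∈ Finset.univ.erase j, c k • ((B k)ᵀ * X k * B k)
          = ∑ k ∈ Finset.univ.erase j, c k • ((B k)ᵀ * A k * B k) :=
        Finset.sum_congr rfl fun k hk => by rw [hXk k (Finset.ne_of_mem_erase hk)]
      rw [he, hXj]
      have hexp : c j • ((B j)ᵀ * (A j + t • D) * B j)
          = c j • ((B j)ᵀ * A j * B j) + (t * c j) • N := by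
        rw [Matrix.mul_add, Matrix.add_mul, Matrix.mul_smul, Matrix.smul_mul, smul_add,
          smul_smul, hNdef, mul_comm (c j) t]
      rw [hexp]
      abel
    have hMX : ∑ k, c k • ((B k)ᵀ * X k * B k) + Q = M + (t * c j) • N := by
      rw [hsum, hMdef]
      abel
    have hX3 : (∑ k, c k • ((B k)ᵀ * X k * B k) + Q).PosDef := by
      rw [hMX]
      exact hMt t ht
    have hΦ := hmin X hX1 hX2 hX3
    rw [hMX] at hΦ
    have hLsum : ∑ k, c k * Real.log (X k).det
        = (∑ k, c k * Real.log (A k).det)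
          + c j * (Real.log (A j + t • D).det - Real.log (A j).det) := by
      rw [← Finset.add_sum_erase _ (fun k => c k * Real.log (X k).det) (Finset.mem_univ j),
          ← Finset.add_sum_erase _ (fun k => c k * Real.log (A k).det) (Finset.mem_univ j)]
      have he : ∑ k ∈ Finset.univ.erase j, c k * Real.log (X k).det
          = ∑ k ∈ Finset.univ.erase j, c k * Real.log (A k).det :=
        Finset.sum_congr rfl fun k hk => by rw [hXk k (Finset.ne_of_mem_erase hk)]
      rw [he, hXj]
      ring
    rw [hLsum] at hΦ
    rw [← hNdef]
    linarith
  -- Part (i): -(c j • S) is PSD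
  have hpart1 : ∀ x : Fin (nj j) → ℝ, c j * (x ⬝ᵥ (S *ᵥ x)) ≤ 0 := by
    intro x
    have hPpsd : (Matrix.vecMulVec x x).PosSemidef := my_vecMulVec_psd x
    have hkey := key (-(Matrix.vecMulVec x x)) (by
      show (-(Matrix.vecMulVec x x))ᴴ = -(Matrix.vecMulVec x x)
      rw [Matrix.conjTranspose_neg, hPpsd.isHermitian.eq])
      ?_
    · rw [Matrix.mul_neg, Matrix.trace_neg, my_trace_mul_vecMulVec] at hkey
      linarith
    obtain ⟨ε, hε, hopen⟩ := my_open_posDef (hA j) (by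
      show (-(Matrix.vecMulVec x x))ᴴ = -(Matrix.vecMulVec x x)
      rw [Matrix.conjTranspose_neg, hPpsd.isHermitian.eq])
    refine ⟨ε, hε, fun t ht => ⟨hopen t (by rw [abs_of_pos ht.1]; exact ht.2), ?_⟩⟩
    have heq : G j - (A j + t • -(Matrix.vecMulVec x x)) = (G j - A j) + t • (Matrix.vecMulVec x x) := by
      rw [smul_neg]; abel
    rw [heq]
    exact (hAG j).add (my_psd_smul hPpsd ht.1.le)
  have hpsd : (-(c j • S)).PosSemidef := by
    refine Matrix.posSemidef_iff_dotProduct_mulVec.mpr ⟨?_, ?_⟩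
    · show (-(c j • S))ᴴ = -(c j • S)
      rw [Matrix.conjTranspose_neg, Matrix.conjTranspose_smul, hSh.eq]
      simp
    · intro x
      have : star x ⬝ᵥ ((-(c j • S)) *ᵥ x) = -(c j * (x ⬝ᵥ (S *ᵥ x))) := by
        rw [star_trivial, Matrix.neg_mulVec, dotProduct_neg, Matrix.smul_mulVec,
          dotProduct_smul, smul_eq_mul]
      rw [this]
      linarith [hpart1 x]
  refine ⟨hpsd, ?_⟩
  -- Part (ii)
  set D : Matrix (Fin (nj j)) (Fin (nj j)) ℝ := G j - A j with hD
  have hDpsd : D.PosSemidef := hAG j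
  -- positive direction
  have hplus : 0 ≤ c j * (S * D).trace := by
    apply key D hDpsd.isHermitian
    refine ⟨1, one_pos, fun t ht => ⟨?_, ?_⟩⟩
    · exact (hA j).add_posSemidef (my_psd_smul hDpsd ht.1.le)
    · have : G j - (A j + t • D) = (1 - t) • D := by
        rw [sub_smul, one_smul, hD]; abel
      rw [this]
      exact my_psd_smul hDpsd (by linarith [ht.2])
  -- negative direction
  have hminus : c j * (S * D).trace ≤ 0 := by
    have hkey := key (-D) (by
      show (-D)ᴴ = -D
      rw [Matrix.conjTranspose_neg, hDpsd.isHermitian.eq]) ?_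
    · rw [Matrix.mul_neg, Matrix.trace_neg] at hkey
      linarith
    obtain ⟨ε, hε, hopen⟩ := my_open_posDef (hA j) (by
      show (-D)ᴴ = -D
      rw [Matrix.conjTranspose_neg, hDpsd.isHermitian.eq])
    refine ⟨ε, hε, fun t ht => ⟨hopen t (by rw [abs_of_pos ht.1]; exact ht.2), ?_⟩⟩
    have : G j - (A j + t • -D) = (G j - A j) + t • D := by
      rw [smul_neg]; abel
    rw [this]
    exact (hAG j).add (my_psd_smul hDpsd ht.1.le)
  have htr0 : (S * D).trace = 0 := by
    have := le_antisymm hminus hplus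
    rcases mul_eq_zero.mp this with h | h
    · exact absurd h (hc j)
    · exact h
  have hPD0 : (-(c j • S)) * D = 0 := by
    apply my_psd_mul_trace_zero hpsd hDpsd
    have : (-(c j • S)) * D = (-(c j)) • (S * D) := by
      rw [Matrix.neg_mul, Matrix.smul_mul, neg_smul]
    rw [this, Matrix.trace_smul, htr0]
    simp
  have : (-(c j)) • (S * D) = 0 := by
    rw [← hPD0, Matrix.neg_mul, Matrix.smul_mul, neg_smul]
  rcases smul_eq_zero.mp this with h | h
  · exact absurd (neg_eq_zero.mp h) (hc j)
  · exact h
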